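/- Let E be a finite-dimensional vector space over a field k. There is a bijection between the set of prevaluations v : E \ {0} → ℚ on E and the set of labeled flags in E, i.e. pairs (F_•, c_•) consisting of a flag of subspaces F_• = ({0} ⊊ F₁ ⊊ ⋯ ⊊ F_k = E) together with a strictly decreasing sequence c_• = (c₁ > ⋯ > c_k) of rational numbers; the bijection sends v to the flag whose subspaces are the distinct sets F_{v≥c} = {e ∈ E : v(e) ≥ c} ∪ {0} for c in the value set {c₁ > ⋯ > c_k} = v(E \ {0}), with F_i = F_{v≥c_i} labeled by c_i. -/

import Mathlib

/-- A prevaluation on a vector space `E` over a field `k`: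
a function `v : E \ {0} → ℚ` invariant under nonzero scalings and satisfying
the non-Archimedean inequality. -/
def IsPreval (k : Type*) [Field k] {E : Type*} [AddCommGroup E] [Module k E]
    (v : {e : E // e ≠ 0} → ℚ) : Prop :=
  (∀ (c : k) (hc : c ≠ 0) (e : E) (he : e ≠ 0),
      v ⟨c • e, smul_ne_zero hc he⟩ = v ⟨e, he⟩) ∧
  (∀ (e₁ e₂ : E) (h₁ : e₁ ≠ 0) (h₂ : e₂ ≠ 0) (h : e₁ + e₂ ≠ 0),
      min (v ⟨e₁, h₁⟩) (v ⟨e₂, h₂⟩) ≤ v ⟨e₁ + e₂, h⟩)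

/-- A labeled flag in `E`: a strictly increasing chain of nonzero subspaces
`F₁ ⊊ ⋯ ⊊ F_len = E`, each labeled by a rational number, with the labels
strictly decreasing along the chain. -/
structure LabeledFlag (k E : Type*) [Field k] [AddCommGroup E] [Module k E] where
  len : ℕ
  len_pos : 0 < len
  F : Fin len → Submodule k E
  c : Fin len → ℚ
  strictMono_F : StrictMono F
  ne_bot : ∀ i, F i ≠ ⊥
  last_eq_top : F ⟨len - 1, Nat.sub_lt len_pos Nat.one_pos⟩ = ⊤
  strictAnti_c : StrictAnti c

section Aux

variable {k E : Type*} [Field k] [AddCommGroup E] [Module k E]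

/-- The level-set submodule of a prevaluation. -/
def lvl (v : {e : E // e ≠ 0} → ℚ) (hv : IsPreval k v) (q : ℚ) : Submodule k E where
  carrier := {e : E | e = 0 ∨ ∃ he : e ≠ 0, q ≤ v ⟨e, he⟩}
  zero_mem' := Or.inl rfl
  add_mem' := by
    rintro a b (rfl | ⟨ha, hva⟩) hb
    · simpa using hb
    rcases hb with rfl | ⟨hb, hvb⟩
    · simpa using Or.inr ⟨ha, hva⟩
    by_cases hab : a + b = 0
    · exact Or.inl hab
    · exact Or.inr ⟨hab, le_trans (le_min hva hvb) (hv.2 a b ha hb hab)⟩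
  smul_mem' := by
    rintro c x (rfl | ⟨hx, hvx⟩)
    · simp
    by_cases hc : c = 0
    · simp [hc]
    · exact Or.inr ⟨smul_ne_zero hc hx, by rw [hv.1 c hc x hx]; exact hvx⟩

theorem mem_lvl {v : {e : E // e ≠ 0} → ℚ} (hv : IsPreval k v) {q : ℚ} {e : E} (he : e ≠ 0) :
    e ∈ lvl v hv q ↔ q ≤ v ⟨e, he⟩ := by
  constructor
  · rintro (rfl | ⟨he', h⟩)
    · exact absurd rfl he
    · exact h
  · exact fun h => Or.inr ⟨he, h⟩

theorem lvl_antitone {v : {e : E // e ≠ 0} → ℚ} (hv : IsPreval k v) :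
    Antitone (lvl v hv) := by
  intro q q' hqq' e h
  rcases h with rfl | ⟨he, h⟩
  · exact Or.inl rfl
  · exact Or.inr ⟨he, le_trans hqq' h⟩

theorem lvl_lt {v : {e : E // e ≠ 0} → ℚ} (hv : IsPreval k v) {q q' : ℚ}
    (h : q < q') (hq : q ∈ Set.range v) : lvl v hv q' < lvl v hv q := by
  obtain ⟨⟨e, he⟩, rfl⟩ := hq
  refine lt_of_le_of_ne (lvl_antitone hv h.le) fun heq => ?_
  have h1 : e ∈ lvl v hv (v ⟨e, he⟩) := Or.inr ⟨he, le_rfl⟩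
  rw [← heq] at h1
  exact absurd ((mem_lvl hv he).1 h1) (not_le.2 h)

theorem finite_range (v : {e : E // e ≠ 0} → ℚ) (hv : IsPreval k v) [FiniteDimensional k E] :
    (Set.range v).Finite := by
  have hinj : Set.InjOn (fun q => Module.finrank k (lvl v hv q)) (Set.range v) := by
    intro a ha b hb hab
    dsimp only at hab
    by_contra hne
    rcases lt_or_gt_of_ne hne with h | h
    · exact ne_of_gt (Submodule.finrank_lt_finrank_of_lt (lvl_lt hv h ha)) hab
    · exact ne_of_lt (Submodule.finrank_lt_finrank_of_lt (lvl_lt hv h hb)) hab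
  refine Set.Finite.of_finite_image ?_ hinj
  exact Set.Finite.subset (Set.finite_Iic (Module.finrank k E))
    (by rintro n ⟨q, _, rfl⟩; exact Submodule.finrank_le _)

variable [FiniteDimensional k E] [Nontrivial E]

/-- The finset of values of a prevaluation. -/
noncomputable def valFinset (v : {e : E // e ≠ 0} → ℚ) (hv : IsPreval k v) : Finset ℚ :=
  (finite_range v hv).toFinset

theorem mem_valFinset {v : {e : E // e ≠ 0} → ℚ} (hv : IsPreval k v) {q : ℚ} :
    q ∈ valFinset v hv ↔ q ∈ Set.range v := Set.Finite.mem_toFinset _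

theorem valFinset_nonempty {v : {e : E // e ≠ 0} → ℚ} (hv : IsPreval k v) :
    (valFinset v hv).Nonempty := by
  obtain ⟨e, he⟩ := exists_ne (0 : E)
  exact ⟨v ⟨e, he⟩, (mem_valFinset hv).2 ⟨⟨e, he⟩, rfl⟩⟩

/-- The forward map: the labeled flag of a prevaluation. -/
noncomputable def flagOf (v : {e : E // e ≠ 0} → ℚ) (hv : IsPreval k v) : LabeledFlag k E where
  len := (valFinset v hv).card
  len_pos := Finset.card_pos.2 (valFinset_nonempty hv)
  F := fun i => lvl v hv ((valFinset v hv).orderEmbOfFin rfl i.rev)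
  c := fun i => (valFinset v hv).orderEmbOfFin rfl i.rev
  strictMono_F := by
    intro i j hij
    refine lvl_lt hv ?_ ?_
    · exact (valFinset v hv).orderEmbOfFin rfl |>.strictMono (Fin.rev_lt_rev.2 hij)
    · exact (mem_valFinset hv).1 (Finset.orderEmbOfFin_mem _ _ _)
  ne_bot := by
    intro i
    obtain ⟨⟨e, he⟩, hve⟩ := (mem_valFinset hv).1
      (Finset.orderEmbOfFin_mem (valFinset v hv) rfl i.rev)
    intro hbot
    have : e ∈ lvl v hv ((valFinset v hv).orderEmbOfFin rfl i.rev) :=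
      (mem_lvl hv he).2 (le_of_eq hve.symm)
    rw [hbot, Submodule.mem_bot] at this
    exact he this
  last_eq_top := by
    have hcard : 0 < (valFinset v hv).card := Finset.card_pos.2 (valFinset_nonempty hv)
    have hrev : (⟨(valFinset v hv).card - 1, Nat.sub_lt hcard Nat.one_pos⟩ :
        Fin (valFinset v hv).card).rev = ⟨0, hcard⟩ := by
      ext; simp [Fin.rev]; omega
    rw [hrev]
    have hmin : ∀ q ∈ valFinset v hv,
        (valFinset v hv).orderEmbOfFin rfl ⟨0, hcard⟩ ≤ q := by
      intro q hq
      have : q ∈ Set.range ((valFinset v hv).orderEmbOfFin rfl) := by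
        rw [Finset.range_orderEmbOfFin]; exact hq
      obtain ⟨j, rfl⟩ := this
      exact ((valFinset v hv).orderEmbOfFin rfl).monotone (Fin.mk_le_of_le_val (Nat.zero_le _))
    rw [eq_top_iff]
    rintro e -
    by_cases he : e = 0
    · exact Or.inl he
    · exact Or.inr ⟨he, hmin _ ((mem_valFinset hv).2 ⟨⟨e, he⟩, rfl⟩)⟩
  strictAnti_c := fun i j hij =>
    (valFinset v hv).orderEmbOfFin rfl |>.strictMono (Fin.rev_lt_rev.2 hij)

theorem range_c_flagOf {v : {e : E // e ≠ 0} → ℚ} (hv : IsPreval k v) :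
    Set.range (flagOf v hv).c = Set.range v := by
  have h1 : Set.range (flagOf v hv).c
      = Set.range ((valFinset v hv).orderEmbOfFin rfl) := by
    apply Set.Subset.antisymm
    · rintro q ⟨i, rfl⟩; exact ⟨i.rev, rfl⟩
    · rintro q ⟨i, rfl⟩; exact ⟨i.rev, by simp [flagOf]⟩
  rw [h1, Finset.range_orderEmbOfFin, valFinset, Set.Finite.coe_toFinset]

end Aux

section Idx

open Classical

variable {k E : Type*} [Field k] [AddCommGroup E] [Module k E]

/-- The minimal index of a flag subspace containing `e`. -/
noncomputable def idx (L : LabeledFlag k E) (e : E) : Fin L.len :=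
  (Finset.univ.filter (fun i : Fin L.len => e ∈ L.F i)).min'
    ⟨⟨L.len - 1, Nat.sub_lt L.len_pos Nat.one_pos⟩, by
      simp [L.last_eq_top]⟩

theorem mem_idx (L : LabeledFlag k E) (e : E) : e ∈ L.F (idx L e) := by
  have := Finset.min'_mem (Finset.univ.filter (fun i => e ∈ L.F i))
    ⟨⟨L.len - 1, Nat.sub_lt L.len_pos Nat.one_pos⟩, by simp [L.last_eq_top]⟩
  simpa [idx] using (Finset.mem_filter.1 this).2

theorem idx_le (L : LabeledFlag k E) {e : E} {j : Fin L.len} (h : e ∈ L.F j) :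
    idx L e ≤ j := by
  unfold idx
  exact Finset.min'_le _ j (Finset.mem_filter.2 ⟨Finset.mem_univ j, h⟩)

theorem mem_F_iff (L : LabeledFlag k E) {e : E} {j : Fin L.len} :
    e ∈ L.F j ↔ idx L e ≤ j :=
  ⟨idx_le L, fun h => L.strictMono_F.monotone h (mem_idx L e)⟩

theorem idx_unique (L : LabeledFlag k E) {e : E} {i : Fin L.len} (h1 : e ∈ L.F i)
    (h2 : ∀ j, e ∈ L.F j → i ≤ j) : idx L e = i :=
  le_antisymm (idx_le L h1) (h2 _ (mem_idx L e))

/-- The prevaluation associated to a labeled flag. -/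
noncomputable def wOf (L : LabeledFlag k E) : {e : E // e ≠ 0} → ℚ :=
  fun e => L.c (idx L e.1)

theorem mem_F_iff_le_wOf (L : LabeledFlag k E) {e : E} (he : e ≠ 0) {i : Fin L.len} :
    e ∈ L.F i ↔ L.c i ≤ wOf L ⟨e, he⟩ := by
  rw [mem_F_iff, wOf]
  exact ⟨fun h => L.strictAnti_c.antitone h, fun h => L.strictAnti_c.le_iff_ge.1 h⟩

theorem isPreval_wOf (L : LabeledFlag k E) : IsPreval k (wOf L) := by
  constructor
  · intro c hc e he
    show L.c (idx L (c • e)) = L.c (idx L e)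
    congr 1
    refine idx_unique L (Submodule.smul_mem _ c (mem_idx L e)) fun j hj => ?_
    exact idx_le L ((Submodule.smul_mem_iff _ hc).1 hj)
  · intro e₁ e₂ h₁ h₂ h
    show min (L.c (idx L e₁)) (L.c (idx L e₂)) ≤ L.c (idx L (e₁ + e₂))
    have hmem : e₁ + e₂ ∈ L.F (max (idx L e₁) (idx L e₂)) := by
      refine Submodule.add_mem _ ?_ ?_
      · exact L.strictMono_F.monotone (le_max_left _ _) (mem_idx L e₁)
      · exact L.strictMono_F.monotone (le_max_right _ _) (mem_idx L e₂)
    calc min (L.c (idx L e₁)) (L.c (idx L e₂))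
        = L.c (max (idx L e₁) (idx L e₂)) := (L.strictAnti_c.antitone.map_max).symm
      _ ≤ L.c (idx L (e₁ + e₂)) := L.strictAnti_c.antitone (idx_le L hmem)

theorem exists_idx_eq (L : LabeledFlag k E) (i : Fin L.len) :
    ∃ (e : E) (he : e ≠ 0), idx L e = i := by
  by_cases h0 : i = ⟨0, L.len_pos⟩
  · obtain ⟨e, heF, he⟩ := Submodule.exists_mem_ne_zero_of_ne_bot (L.ne_bot i)
    refine ⟨e, he, idx_unique L heF fun j _ => ?_⟩
    subst h0; exact Fin.mk_le_of_le_val (Nat.zero_le _)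
  · have hival : 0 < i.val := by
      rcases Nat.eq_zero_or_pos i.val with h | h
      · exact absurd (Fin.ext h) h0
      · exact h
    set j : Fin L.len := ⟨i.val - 1, lt_trans (Nat.sub_lt hival Nat.one_pos) i.isLt⟩ with hj
    have hji : j < i := by
      rw [Fin.lt_def]
      show i.val - 1 < i.val
      omega
    obtain ⟨e, heFi, heFj⟩ := SetLike.exists_of_lt (L.strictMono_F hji)
    have he : e ≠ 0 := fun h => heFj (h ▸ Submodule.zero_mem _)
    refine ⟨e, he, idx_unique L heFi fun j' hj' => ?_⟩
    by_contra hlt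
    push_neg at hlt
    have : j' ≤ j := by
      rw [Fin.lt_def] at hlt
      rw [Fin.le_def]
      show j'.val ≤ i.val - 1
      omega
    exact heFj (L.strictMono_F.monotone this hj')

theorem range_wOf (L : LabeledFlag k E) : Set.range (wOf L) = Set.range L.c := by
  apply Set.Subset.antisymm
  · rintro q ⟨e, rfl⟩; exact ⟨idx L e.1, rfl⟩
  · rintro q ⟨i, rfl⟩
    obtain ⟨e, he, hidx⟩ := exists_idx_eq L i
    exact ⟨⟨e, he⟩, by simp [wOf, hidx]⟩

theorem lvl_wOf (L : LabeledFlag k E) (i : Fin L.len) :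
    lvl (wOf L) (isPreval_wOf L) (L.c i) = L.F i := by
  ext e
  by_cases he : e = 0
  · subst he; exact iff_of_true (Submodule.zero_mem _) (Submodule.zero_mem _)
  · rw [mem_lvl (isPreval_wOf L) he, ← mem_F_iff_le_wOf L he]

theorem LabeledFlag.ext' {L₁ L₂ : LabeledFlag k E} (h : L₁.len = L₂.len)
    (hF : ∀ i, L₁.F i = L₂.F (Fin.cast h i)) (hc : ∀ i, L₁.c i = L₂.c (Fin.cast h i)) :
    L₁ = L₂ := by
  obtain ⟨l₁, p₁, F₁, c₁, m₁, n₁, t₁, a₁⟩ := L₁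
  obtain ⟨l₂, p₂, F₂, c₂, m₂, n₂, t₂, a₂⟩ := L₂
  dsimp at h
  subst h
  obtain rfl : F₁ = F₂ := funext fun i => hF i
  obtain rfl : c₁ = c₂ := funext fun i => hc i
  rfl

end Idx

section Main

variable {k E : Type*} [Field k] [AddCommGroup E] [Module k E]
variable [FiniteDimensional k E] [Nontrivial E]

theorem wOf_flagOf {v : {e : E // e ≠ 0} → ℚ} (hv : IsPreval k v) (e : E) (he : e ≠ 0) :
    wOf (flagOf v hv) ⟨e, he⟩ = v ⟨e, he⟩ := by
  set L := flagOf v hv with hL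
  have hmemrange : v ⟨e, he⟩ ∈ Set.range L.c := by
    rw [hL, range_c_flagOf hv]; exact ⟨⟨e, he⟩, rfl⟩
  obtain ⟨i₀, hi₀⟩ := hmemrange
  have hFdef : ∀ i : Fin L.len, (e ∈ L.F i ↔ L.c i ≤ v ⟨e, he⟩) := by
    intro i
    exact mem_lvl hv he
  have h1 : idx L e = i₀ := by
    refine idx_unique L ((hFdef i₀).2 (le_of_eq hi₀)) fun j hj => ?_
    have := (hFdef j).1 hj
    rw [← hi₀] at this
    exact L.strictAnti_c.le_iff_ge.1 this
  show L.c (idx L e) = v ⟨e, he⟩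
  rw [h1, hi₀]

theorem flagOf_wOf (L : LabeledFlag k E) :
    flagOf (wOf L) (isPreval_wOf L) = L := by
  set w := wOf L with hw
  set hw' := isPreval_wOf L
  have hsets : (valFinset w hw' : Set ℚ) = Set.range L.c := by
    rw [valFinset, Set.Finite.coe_toFinset, hw, range_wOf]
  have hfinset : valFinset w hw' = Finset.image L.c Finset.univ := by
    apply Finset.coe_injective
    rw [hsets, Finset.coe_image, Finset.coe_univ, Set.image_univ]
  have hlen : (flagOf w hw').len = L.len := by
    show (valFinset w hw').card = L.len
    rw [hfinset, Finset.card_image_of_injective _ L.strictAnti_c.injective,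
      Finset.card_univ, Fintype.card_fin]
  -- the enumeration agrees with L.c
  have hcc : ∀ i : Fin (flagOf w hw').len,
      (valFinset w hw').orderEmbOfFin rfl i = L.c (Fin.cast hlen i).rev := by
    have key : (fun j : Fin (flagOf w hw').len => L.c (Fin.cast hlen j).rev)
        = (valFinset w hw').orderEmbOfFin rfl := by
      apply Finset.orderEmbOfFin_unique
      · intro x
        rw [← Finset.mem_coe, hsets]
        exact ⟨_, rfl⟩
      · intro a b hab
        exact L.strictAnti_c (Fin.rev_lt_rev.2 (Fin.lt_def.2 (Fin.lt_def.1 hab)))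
    intro i
    rw [← key]
  have hc : ∀ i, (flagOf w hw').c i = L.c (Fin.cast hlen i) := by
    intro i
    show (valFinset w hw').orderEmbOfFin rfl i.rev = _
    rw [hcc i.rev]
    congr 1
    ext
    simp [Fin.rev]
    omega
  refine LabeledFlag.ext' hlen ?_ hc
  intro i
  show lvl w hw' ((valFinset w hw').orderEmbOfFin rfl i.rev) = _
  have : (valFinset w hw').orderEmbOfFin rfl i.rev = L.c (Fin.cast hlen i) := hc i
  rw [this, lvl_wOf]

end Main

/-- There is a bijection between prevaluations on `E` and labeled flags in `E`,
sending `v` to the flag of subspaces `F_{v ≥ c_i}` for `c₁ > ⋯ > c_k` the value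
set of `v`, with `F_i = F_{v ≥ c_i}` labeled by `c_i`. -/
theorem stmt3 {k E : Type*} [Field k] [AddCommGroup E] [Module k E]
    [FiniteDimensional k E] [Nontrivial E] :
    ∃ Θ : {v : {e : E // e ≠ 0} → ℚ // IsPreval k v} ≃ LabeledFlag k E,
      ∀ v : {v : {e : E // e ≠ 0} → ℚ // IsPreval k v},
        Set.range (Θ v).c = Set.range v.1 ∧
        ∀ i, ((Θ v).F i : Set E)
            = {e : E | e = 0 ∨ ∃ he : e ≠ 0, (Θ v).c i ≤ v.1 ⟨e, he⟩} := by
  have hbij : Function.Bijective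
      (fun v : {v : {e : E // e ≠ 0} → ℚ // IsPreval k v} => flagOf v.1 v.2) := by
    constructor
    · rintro ⟨v, hv⟩ ⟨v', hv'⟩ h
      dsimp only at h
      apply Subtype.ext
      funext ⟨e, he⟩
      have h1 := wOf_flagOf hv e he
      have h2 := wOf_flagOf hv' e he
      dsimp only
      rw [← h1, ← h2, h]
    · intro L
      exact ⟨⟨wOf L, isPreval_wOf L⟩, flagOf_wOf L⟩
  refine ⟨Equiv.ofBijective _ hbij, fun v => ?_⟩
  have happ : (Equiv.ofBijective _ hbij) v = flagOf v.1 v.2 := rfl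
  rw [happ]
  exact ⟨range_c_flagOf v.2, fun i => rfl⟩
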